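/- For a single-interface solution of the lattice equation with Φ'(u) = u - sgn(u), if the phase transition at index k occurs at a finite time t*_k, then u_{k-1}(t*_k) > 2, the jump relation u̇_k(t*_k + 0) = 4 + u̇_k(t*_k - 0) ≥ 4 holds, and consecutive transition times satisfy t*_{k+1} - t*_k ≥ ln √((D+2)/(D-2)), where D = max{2, sup_j u_j(0)}. -/

import Mathlib

open Real Filter

/-- Sign function with the convention `sgn 0 = +1`. -/
noncomputable def dsgn (x : ℝ) : ℝ := if x < 0 then -1 else 1

/-- The piecewise affine bistable nonlinearity `Φ'(u) = u - sgn u`. -/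
noncomputable def dphi (u : ℝ) : ℝ := u - dsgn u

/-- The discrete Laplacian on ℤ. -/
def dLap (p : ℤ → ℝ) (j : ℤ) : ℝ := p (j + 1) - 2 * p j + p (j - 1)

/-- The single-interface state space `X_k`: entries for `j < k` have positive infimum and
finite supremum, entries for `j ≥ k` have infimum `> -2` and supremum `< 0`. -/
def Xset (k : ℤ) : Set (ℤ → ℝ) :=
  {u | (∃ a > (0 : ℝ), ∀ j < k, a ≤ u j) ∧ (∃ b : ℝ, ∀ j < k, u j ≤ b) ∧
       (∃ c > (-2 : ℝ), ∀ j ≥ k, c ≤ u j) ∧ (∃ d < (0 : ℝ), ∀ j ≥ k, u j ≤ d)}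

/-- Single-interface solution of the lattice equation `u̇_j = ΔΦ'(u_j)` with
`Φ'(u) = u - sgn u`, with phase-transition times `tstar k ∈ (0, ∞]` (value `⊤` means
no transition at index `k`), following Definition 3.1 of the paper. -/
def IsSIS (u : ℝ → ℤ → ℝ) (k₁ : ℤ) (tstar : ℤ → EReal) : Prop :=
  (∀ j : ℤ, ContinuousOn (fun t => u t j) (Set.Ici (0 : ℝ))) ∧
  tstar (k₁ - 1) = (0 : EReal) ∧
  (∀ k : ℤ, k₁ ≤ k → 0 < tstar k) ∧
  (∀ k : ℤ, k₁ ≤ k → tstar (k - 1) = ⊤ ∨ tstar (k - 1) < tstar k) ∧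
  (∀ (j : ℤ) (t : ℝ), 0 ≤ t → (∀ k : ℤ, k₁ ≤ k → (t : EReal) ≠ tstar k) →
    HasDerivAt (fun s => u s j) (dLap (fun i => dphi (u t i)) j) t) ∧
  (∀ k : ℤ, k₁ ≤ k → ∀ T : ℝ, tstar k = (T : EReal) →
    u T k = 0 ∧ ∃ L > (0 : ℝ),
      Tendsto (deriv (fun s => u s k)) (nhdsWithin T (Set.Ioi T)) (nhds L)) ∧
  (∀ k : ℤ, k₁ ≤ k → ∀ t : ℝ, tstar (k - 1) < (t : EReal) → (t : EReal) < tstar k →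
    (fun j => u t j) ∈ Xset k)

open Set

/- basic dphi lemmas -/
lemma dphi_of_neg {v : ℝ} (h : v < 0) : dphi v = v + 1 := by
  unfold dphi dsgn; rw [if_pos h]; ring

lemma dphi_of_nonneg {v : ℝ} (h : 0 ≤ v) : dphi v = v - 1 := by
  unfold dphi dsgn; rw [if_neg (not_lt.2 h)]

lemma dphi_ge {v : ℝ} : v - 1 ≤ dphi v := by
  unfold dphi dsgn; split_ifs <;> linarith

lemma dphi_le_add_one {v : ℝ} : dphi v ≤ v + 1 := by
  unfold dphi dsgn; split_ifs <;> linarith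

lemma dphi_le_of_le {v B : ℝ} (h : v ≤ B) (hB : 2 ≤ B) : dphi v ≤ B - 1 := by
  unfold dphi dsgn; split_ifs with hv <;> linarith

lemma neg_one_le_dphi {v : ℝ} (h : -2 ≤ v) : -1 ≤ dphi v := by
  unfold dphi dsgn; split_ifs with hv
  · linarith
  · push_neg at hv; linarith

/- Xset helper lemmas, stated for states of the form `fun j => u t j` -/
section Xhelp
variable {u : ℝ → ℤ → ℝ} {t : ℝ} {κ κ' j : ℤ}

lemma Xneg (hXt : (fun j => u t j) ∈ Xset κ) (hj : κ ≤ j) : u t j < 0 := by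
  obtain ⟨-, -, -, d, hd, hdle⟩ := hXt
  exact lt_of_le_of_lt (hdle j hj) hd

lemma Xpos (hXt : (fun j => u t j) ∈ Xset κ) (hj : j < κ) : 0 < u t j := by
  obtain ⟨⟨a, ha, hale⟩, -, -, -⟩ := hXt
  exact lt_of_lt_of_le ha (hale j hj)

lemma Xge (hXt : (fun j => u t j) ∈ Xset κ) (j : ℤ) : -2 ≤ u t j := by
  rcases lt_or_ge j κ with hj | hj
  · linarith [Xpos hXt hj]
  · obtain ⟨-, -, ⟨c, hc, hcle⟩, -⟩ := hXt
    linarith [hcle j hj]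

lemma Xupper (hXt : (fun j => u t j) ∈ Xset κ) : ∃ B : ℝ, 0 ≤ B ∧ ∀ j, u t j ≤ B := by
  obtain ⟨-, ⟨b, hble⟩, -, d, hd, hdle⟩ := hXt
  refine ⟨max b 0, le_max_right _ _, fun j => ?_⟩
  rcases lt_or_ge j κ with hj | hj
  · exact le_trans (hble j hj) (le_max_left _ _)
  · exact le_trans (hdle j hj) (by simp [le_max_iff]; right; linarith)

lemma Xuniq (h1 : (fun j => u t j) ∈ Xset κ) (h2 : (fun j => u t j) ∈ Xset κ') : κ = κ' := by
  by_contra hne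
  rcases lt_or_gt_of_ne hne with hlt | hlt
  · linarith [Xneg h1 (le_refl κ), Xpos h2 hlt]
  · linarith [Xneg h2 (le_refl κ'), Xpos h1 hlt]

end Xhelp

/- glue monotonicity lemma with finite exceptional set -/
private lemma glue_mono_aux : ∀ (n : ℕ) (E : Set ℝ), E.Finite → E.ncard ≤ n →
    ∀ (f g : ℝ → ℝ) (a b : ℝ), a ≤ b → ContinuousOn f (Icc a b) →
    (∀ x ∈ Ioo a b, x ∉ E → HasDerivAt f (g x) x) →
    (∀ x ∈ Ioo a b, x ∉ E → 0 ≤ g x) → f a ≤ f b := by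
  intro n
  induction n with
  | zero =>
    intro E hE hcard f g a b hab hf hder hg
    have hEe : E = ∅ := (Set.ncard_eq_zero hE).mp (by omega)
    subst hEe
    rcases eq_or_lt_of_le hab with rfl | hab'
    · exact le_rfl
    · have hmono := monotoneOn_of_deriv_nonneg (convex_Icc a b) hf
        (fun x hx => by
          rw [interior_Icc] at hx
          exact (hder x hx (Set.notMem_empty x)).differentiableAt.differentiableWithinAt)
        (fun x hx => by
          rw [interior_Icc] at hx
          rw [(hder x hx (Set.notMem_empty x)).deriv]
          exact hg x hx (Set.notMem_empty x))
      exact hmono (left_mem_Icc.2 hab) (right_mem_Icc.2 hab) hab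
  | succ n ih =>
    intro E hE hcard f g a b hab hf hder hg
    by_cases hc : (E ∩ Ioo a b).Nonempty
    · obtain ⟨c, hcE, hcI⟩ := hc
      have hcard' : (E \ {c}).ncard ≤ n := by
        have := Set.ncard_diff_singleton_lt_of_mem hcE hE
        omega
      have h1 : f a ≤ f c := by
        refine ih (E \ {c}) (hE.diff) hcard' f g a c hcI.1.le
          (hf.mono (Icc_subset_Icc le_rfl hcI.2.le))
          (fun x hx hx' => hder x ⟨hx.1, hx.2.trans hcI.2⟩ ?_)
          (fun x hx hx' => hg x ⟨hx.1, hx.2.trans hcI.2⟩ ?_) <;>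
        · intro hxE
          exact hx' ⟨hxE, by rintro rfl; exact absurd hx.2 (lt_irrefl _)⟩
      have h2 : f c ≤ f b := by
        refine ih (E \ {c}) (hE.diff) hcard' f g c b hcI.2.le
          (hf.mono (Icc_subset_Icc hcI.1.le le_rfl))
          (fun x hx hx' => hder x ⟨hcI.1.trans hx.1, hx.2⟩ ?_)
          (fun x hx hx' => hg x ⟨hcI.1.trans hx.1, hx.2⟩ ?_) <;>
        · intro hxE
          exact hx' ⟨hxE, by rintro rfl; exact absurd hx.1 (lt_irrefl _)⟩
      exact h1.trans h2
    · refine ih ∅ finite_empty (by simp) f g a b hab hf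
        (fun x hx _ => hder x hx (fun hxE => hc ⟨x, hxE, hx⟩))
        (fun x hx _ => hg x hx (fun hxE => hc ⟨x, hxE, hx⟩))

lemma glue_mono {E : Set ℝ} (hE : E.Finite) {f g : ℝ → ℝ} {a b : ℝ} (hab : a ≤ b)
    (hf : ContinuousOn f (Icc a b))
    (hder : ∀ x ∈ Ioo a b, x ∉ E → HasDerivAt f (g x) x)
    (hg : ∀ x ∈ Ioo a b, x ∉ E → 0 ≤ g x) : f a ≤ f b :=
  glue_mono_aux E.ncard E hE le_rfl f g a b hab hf hder hg

/- one-sided continuity helpers -/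
lemma tendsto_left_of_continuousOn {f : ℝ → ℝ} (hc : ContinuousOn f (Ici (0:ℝ)))
    {a T : ℝ} (ha : 0 ≤ a) (hlt : a < T) : Tendsto f (nhdsWithin T (Iio T)) (nhds (f T)) := by
  have h1 : ContinuousWithinAt f (Ici 0) T := hc T (le_trans ha hlt.le)
  have h2 : Tendsto f (nhdsWithin T (Ico a T)) (nhds (f T)) :=
    h1.mono_left (nhdsWithin_mono _ (fun x hx => le_trans ha hx.1))
  rwa [nhdsWithin_Ico_eq_nhdsLT hlt] at h2

lemma tendsto_right_of_continuousOn {f : ℝ → ℝ} (hc : ContinuousOn f (Ici (0:ℝ)))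
    {T b : ℝ} (hT : 0 ≤ T) (hlt : T < b) : Tendsto f (nhdsWithin T (Ioi T)) (nhds (f T)) := by
  have h1 : ContinuousWithinAt f (Ici 0) T := hc T hT
  have h2 : Tendsto f (nhdsWithin T (Ioc T b)) (nhds (f T)) :=
    h1.mono_left (nhdsWithin_mono _ (fun x hx => le_trans hT hx.1.le))
  rwa [nhdsWithin_Ioc_eq_nhdsGT hlt] at h2

section Struct
variable {u : ℝ → ℤ → ℝ} {k₁ : ℤ} {tstar : ℤ → EReal}

/-- no transition happens at a time where the state is in some `Xset`. -/
lemma noTrans (h : IsSIS u k₁ tstar) {κ : ℤ} {t : ℝ}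
    (hXt : (fun j => u t j) ∈ Xset κ) : ∀ k'' : ℤ, k₁ ≤ k'' → (t : EReal) ≠ tstar k'' := by
  obtain ⟨-, -, -, -, -, htrans, -⟩ := id h
  intro k'' hk'' heq
  have h0 : u t k'' = 0 := (htrans k'' hk'' t heq.symm).1
  rcases le_or_gt κ k'' with hcase | hcase
  · exact absurd h0 (ne_of_lt (Xneg hXt hcase))
  · exact absurd h0 (ne_of_gt (Xpos hXt hcase))

lemma tstar_pos_real (h : IsSIS u k₁ tstar) {k : ℤ} (hk : k₁ ≤ k) {T : ℝ}
    (hT : tstar k = (T : EReal)) : 0 < T := by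
  obtain ⟨-, -, hpos, -⟩ := id h
  have h1 := hpos k hk
  rw [hT, ← EReal.coe_zero] at h1
  exact EReal.coe_lt_coe_iff.mp h1

/-- Lemma A: the previous transition time is a real number `< T`. -/
lemma lemA (h : IsSIS u k₁ tstar) {k : ℤ} (hk : k₁ ≤ k) {T : ℝ}
    (hT : tstar k = (T : EReal)) :
    ∃ t₀ : ℝ, 0 ≤ t₀ ∧ t₀ < T ∧ tstar (k - 1) = (t₀ : EReal) := by
  obtain ⟨hcont, h0, hpos, hord, hode, htrans, hX⟩ := id h
  have hTpos : 0 < T := tstar_pos_real h hk hT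
  rcases eq_or_lt_of_le hk with rfl | hkk
  · exact ⟨0, le_rfl, hTpos, by rw [h0, EReal.coe_zero]⟩
  by_cases hlt : tstar (k - 1) < (T : EReal)
  · have hp : (0 : EReal) < tstar (k-1) := hpos (k-1) (by omega)
    have hne_top : tstar (k-1) ≠ ⊤ := ne_top_of_lt hlt
    have hne_bot : tstar (k-1) ≠ ⊥ := (lt_of_le_of_lt bot_le hp).ne'
    refine ⟨(tstar (k-1)).toReal, ?_, ?_, (EReal.coe_toReal hne_top hne_bot).symm⟩
    · have h2 : ((0:ℝ) : EReal) < ((tstar (k-1)).toReal : EReal) := by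
        rw [EReal.coe_toReal hne_top hne_bot, EReal.coe_zero]; exact hp
      exact (EReal.coe_lt_coe_iff.mp h2).le
    · have h2 : (((tstar (k-1)).toReal : ℝ) : EReal) < (T : EReal) := by
        rw [EReal.coe_toReal hne_top hne_bot]; exact hlt
      exact EReal.coe_lt_coe_iff.mp h2
  · have htop : tstar (k - 1) = ⊤ := by
      rcases hord k hk with h' | h'
      · exact h'
      · exact absurd (h'.trans_eq hT) hlt
    exfalso
    have hTcoe : (0 : EReal) < (T : EReal) := by
      rw [← EReal.coe_zero]; exact EReal.coe_lt_coe_iff.mpr hTpos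
    obtain ⟨m, ⟨hm1, hm2, hm3⟩, hmax⟩ := Int.exists_greatest_of_bdd
      (P := fun m => k₁ - 1 ≤ m ∧ m ≤ k - 1 ∧ tstar m < (T:EReal))
      ⟨k - 1, fun z hz => hz.2.1⟩
      ⟨k₁ - 1, le_rfl, by omega, by rw [h0]; exact hTcoe⟩
    have hmk : m ≤ k - 2 := by
      rcases eq_or_lt_of_le hm2 with heq | hlt2
      · rw [heq, htop] at hm3; exact absurd hm3 (not_top_lt)
      · omega
    have hnotlt : ¬ tstar (m+1) < (T:EReal) := fun hc => by
      have := hmax (m+1) ⟨by omega, by omega, hc⟩; omega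
    have huTk : u T k = 0 := (htrans k hk T hT).1
    rcases lt_trichotomy (tstar (m+1)) ((T:ℝ):EReal) with hlt' | heq | hgt
    · exact hnotlt hlt'
    · have h1 : (T:EReal) < tstar (m+2) := by
        rcases hord (m+2) (by omega) with hh | hh
        · rw [show m+2-1 = m+1 by ring, heq] at hh
          exact absurd hh (EReal.coe_ne_top T)
        · rwa [show m+2-1 = m+1 by ring, heq] at hh
      have h2 : (T:EReal) < tstar (k+1) := by
        rcases hord (k+1) (by omega) with hh | hh
        · rw [show k+1-1 = k by ring, hT] at hh
          exact absurd hh (EReal.coe_ne_top T)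
        · rwa [show k+1-1 = k by ring, hT] at hh
      obtain ⟨x, hx1, hx2⟩ := EReal.lt_iff_exists_real_btwn.mp (lt_min h1 h2)
      have hXa : (fun j => u x j) ∈ Xset (m+2) :=
        hX (m+2) (by omega) x (by rw [show m+2-1 = m+1 by ring, heq]; exact hx1)
          (lt_of_lt_of_le hx2 (min_le_left _ _))
      have hXb : (fun j => u x j) ∈ Xset (k+1) :=
        hX (k+1) (by omega) x (by rw [show k+1-1 = k by ring, hT]; exact hx1)
          (lt_of_lt_of_le hx2 (min_le_right _ _))
      have hc1 := Xneg hXa (by omega : m + 2 ≤ k)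
      have hc2 := Xpos hXb (by omega : k < k + 1)
      linarith
    · have hXT : (fun j => u T j) ∈ Xset (m+1) :=
        hX (m+1) (by omega) T (by rw [show m+1-1 = m by ring]; exact hm3) hgt
      have := Xneg hXT (by omega : m + 1 ≤ k)
      linarith

/-- discrete intermediate value: every positive time `≤ T` lies in a transition window. -/
lemma ivt (h : IsSIS u k₁ tstar) {k : ℤ} (hk : k₁ ≤ k) {T : ℝ}
    (hT : tstar k = (T : EReal)) {σ : ℝ} (h0σ : 0 < σ) (hσT : σ ≤ T) :
    ∃ k', k₁ ≤ k' ∧ k' ≤ k ∧ tstar (k' - 1) < (σ:EReal) ∧ (σ:EReal) ≤ tstar k' := by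
  obtain ⟨hcont, h0, hpos, hord, hode, htrans, hX⟩ := id h
  obtain ⟨m, ⟨hm1, hm2, hm3⟩, hmax⟩ := Int.exists_greatest_of_bdd
    (P := fun m => k₁ - 1 ≤ m ∧ m ≤ k ∧ tstar m < (σ:EReal))
    ⟨k, fun z hz => hz.2.1⟩
    ⟨k₁ - 1, le_rfl, by omega, by rw [h0, ← EReal.coe_zero]; exact EReal.coe_lt_coe_iff.mpr h0σ⟩
  have hmk : m ≤ k - 1 := by
    rcases eq_or_lt_of_le hm2 with heq | hlt2
    · rw [heq, hT] at hm3
      have := EReal.coe_lt_coe_iff.mp hm3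
      linarith
    · omega
  refine ⟨m+1, by omega, by omega, by rw [show m+1-1 = m by ring]; exact hm3,
    le_of_not_gt fun hc => ?_⟩
  have := hmax (m+1) ⟨by omega, by omega, hc⟩; omega

end Struct

section Struct2
variable {u : ℝ → ℤ → ℝ} {k₁ : ℤ} {tstar : ℤ → EReal}

/-- Every transition in `(0, t₁] ⊆ (0,T')` has index between `k₁` and `k`. -/
lemma transClean (h : IsSIS u k₁ tstar) {k : ℤ} (hk : k₁ ≤ k) {T T' : ℝ}
    (hT : tstar k = (T : EReal)) (hT' : tstar (k+1) = (T' : EReal))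
    {t₁ : ℝ} (ht₁' : t₁ < T')
    {k'' : ℤ} (hk'' : k₁ ≤ k'') {σ : ℝ} (hσ : tstar k'' = (σ:EReal))
    (hσ0 : 0 < σ) (hσ1 : σ ≤ t₁) : k'' ≤ k := by
  obtain ⟨hcont, h0, hpos, hord, hode, htrans, hX⟩ := id h
  obtain ⟨t₀'', ht₀''0, ht₀''σ, ht₀''⟩ := lemA h hk'' hσ
  by_cases hcase : σ ≤ T
  · obtain ⟨k', hk'1, hk'k, hol, hor⟩ := ivt h hk hT hσ0 hcase
    rcases eq_or_lt_of_le hor with heq | hltt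
    · obtain ⟨t₀', ht₀'0, ht₀'σ, ht₀'eq⟩ := lemA h hk'1 heq.symm
      set t := (max t₀'' t₀' + σ)/2 with hts
      have hmax : max t₀'' t₀' < σ := max_lt ht₀''σ ht₀'σ
      have h1 : t₀'' < t := by
        have := le_max_left t₀'' t₀'; simp only [hts]; linarith
      have h2 : t₀' < t := by
        have := le_max_right t₀'' t₀'; simp only [hts]; linarith
      have h3 : t < σ := by simp only [hts]; linarith
      have hXa : (fun j => u t j) ∈ Xset k'' :=
        hX k'' hk'' t (by rw [ht₀'']; exact_mod_cast h1) (by rw [hσ]; exact_mod_cast h3)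
      have hXb : (fun j => u t j) ∈ Xset k' :=
        hX k' hk'1 t (by rw [ht₀'eq]; exact_mod_cast h2) (by rw [← heq]; exact_mod_cast h3)
      have := Xuniq hXa hXb
      omega
    · have hXσ := hX k' hk'1 σ hol hltt
      have h0'' : u σ k'' = 0 := (htrans k'' hk'' σ hσ).1
      rcases le_or_gt k' k'' with hcc | hcc
      · exact absurd h0'' (ne_of_lt (Xneg hXσ hcc))
      · exact absurd h0'' (ne_of_gt (Xpos hXσ hcc))
  · push_neg at hcase
    set t := (max T t₀'' + σ)/2 with hts
    have hmax : max T t₀'' < σ := max_lt hcase ht₀''σ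
    have h1 : T < t := by
      have := le_max_left T t₀''; simp only [hts]; linarith
    have h2 : t₀'' < t := by
      have := le_max_right T t₀''; simp only [hts]; linarith
    have h3 : t < σ := by simp only [hts]; linarith
    have hXa : (fun j => u t j) ∈ Xset k'' :=
      hX k'' hk'' t (by rw [ht₀'']; exact_mod_cast h2) (by rw [hσ]; exact_mod_cast h3)
    have hXb : (fun j => u t j) ∈ Xset (k+1) :=
      hX (k+1) (by omega) t (by rw [show k+1-1 = k by ring, hT]; exact_mod_cast h1)
        (by rw [hT']; exact_mod_cast (by linarith : t < T'))
    have heq := Xuniq hXa hXb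
    exfalso
    rw [heq, hT'] at hσ
    have : T' = σ := EReal.coe_eq_coe_iff.mp hσ
    linarith

/-- the (finite) set of transition times with index in `[k₁, k]`. -/
def Eset (tstar : ℤ → EReal) (k₁ k : ℤ) : Set ℝ :=
  {x : ℝ | ∃ k', k₁ ≤ k' ∧ k' ≤ k ∧ tstar k' = (x : EReal)}

lemma Eset_finite (tstar : ℤ → EReal) (k₁ k : ℤ) : (Eset tstar k₁ k).Finite := by
  apply Set.Finite.subset ((Set.finite_Icc k₁ k).image (fun k' => (tstar k').toReal))
  rintro x ⟨k', h1, h2, h3⟩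
  exact ⟨k', ⟨h1, h2⟩, by show (tstar k').toReal = x; rw [h3]; simp⟩

/-- derivative availability on the slab `(0, t₁]` away from `Eset`. -/
lemma hasDeriv_slab (h : IsSIS u k₁ tstar) {k : ℤ} (hk : k₁ ≤ k) {T T' : ℝ}
    (hT : tstar k = (T : EReal)) (hT' : tstar (k+1) = (T' : EReal))
    {t₁ : ℝ} (ht₁' : t₁ < T') (j : ℤ) {x : ℝ} (hx0 : 0 < x) (hx1 : x ≤ t₁)
    (hxE : x ∉ Eset tstar k₁ k) :
    HasDerivAt (fun s => u s j) (dLap (fun i => dphi (u x i)) j) x := by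
  obtain ⟨hcont, h0, hpos, hord, hode, htrans, hX⟩ := id h
  refine hode j x hx0.le fun k'' hk'' heq => hxE
    ⟨k'', hk'', transClean h hk hT hT' ht₁' hk'' heq.symm hx0 hx1, heq.symm⟩

/-- lower bound `-2` on the whole slab `[0, t₁]`. -/
lemma lower_bound (h : IsSIS u k₁ tstar) {k : ℤ} (hk : k₁ ≤ k) {T T' : ℝ}
    (hT : tstar k = (T : EReal)) (hT' : tstar (k+1) = (T' : EReal))
    {t₁ : ℝ} (ht₁ : T < t₁) (ht₁' : t₁ < T') (j : ℤ) {x : ℝ} (hx0 : 0 ≤ x) (hx1 : x ≤ t₁) :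
    -2 ≤ u x j := by
  obtain ⟨hcont, h0, hpos, hord, hode, htrans, hX⟩ := id h
  rcases eq_or_lt_of_le hx0 with rfl | hx0'
  · -- x = 0 : limit from the right
    have hk₁pos := hpos k₁ le_rfl
    obtain ⟨r, hr0, hr1⟩ := EReal.lt_iff_exists_real_btwn.mp hk₁pos
    have hr0' : (0:ℝ) < r := by
      rw [← EReal.coe_zero] at hr0; exact EReal.coe_lt_coe_iff.mp hr0
    have htend : Tendsto (fun t => u t j) (nhdsWithin 0 (Ioi (0:ℝ))) (nhds (u 0 j)) :=
      tendsto_right_of_continuousOn (hcont j) le_rfl hr0'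
    refine ge_of_tendsto htend ?_
    filter_upwards [Ioo_mem_nhdsGT_of_mem (⟨le_rfl, hr0'⟩ : (0:ℝ) ∈ Ico 0 r)] with t ht
    refine Xge (hX k₁ le_rfl t (by rw [h0, ← EReal.coe_zero]; exact_mod_cast ht.1) ?_) j
    exact lt_trans (by exact_mod_cast ht.2) hr1
  · by_cases hcase : x ≤ T
    · obtain ⟨k', h1, h2, h3, h4⟩ := ivt h hk hT hx0' hcase
      rcases eq_or_lt_of_le h4 with heq | hlt2
      · obtain ⟨t₀', h5, h6, h7⟩ := lemA h h1 heq.symm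
        have htend : Tendsto (fun t => u t j) (nhdsWithin x (Iio x)) (nhds (u x j)) :=
          tendsto_left_of_continuousOn (hcont j) h5 h6
        refine ge_of_tendsto htend ?_
        filter_upwards [Ioo_mem_nhdsLT_of_mem (⟨h6, le_rfl⟩ : x ∈ Ioc t₀' x)] with t ht
        refine Xge (hX k' h1 t (by rw [h7]; exact_mod_cast ht.1)
          (by rw [← heq]; exact_mod_cast ht.2)) j
      · exact Xge (hX k' h1 x h3 hlt2) j
    · push_neg at hcase
      refine Xge (hX (k+1) (by omega) x
        (by rw [show k+1-1 = k by ring, hT]; exact_mod_cast hcase)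
        (by rw [hT']; exact_mod_cast lt_of_le_of_lt hx1 ht₁')) j

end Struct2

section MaxPrinciple
variable {u : ℝ → ℤ → ℝ} {k₁ : ℤ} {tstar : ℤ → EReal}

/-- uniform upper bound on the slab `[0, t₁]`. -/
lemma slab_bound (h : IsSIS u k₁ tstar) {k : ℤ} (hk : k₁ ≤ k) {T T' : ℝ}
    (hT : tstar k = (T : EReal)) (hT' : tstar (k+1) = (T' : EReal))
    {t₁ : ℝ} (ht₁ : T < t₁) (ht₁' : t₁ < T') :
    ∃ B : ℝ, 0 ≤ B ∧ ∀ (j : ℤ) (x : ℝ), 0 ≤ x → x ≤ t₁ → u x j ≤ B := by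
  obtain ⟨hcont, h0, hpos, hord, hode, htrans, hX⟩ := id h
  have hT0 : 0 < T := tstar_pos_real h hk hT
  have hXt₁ : (fun j => u t₁ j) ∈ Xset (k+1) :=
    hX (k+1) (by omega) t₁ (by rw [show k+1-1 = k by ring, hT]; exact_mod_cast ht₁)
      (by rw [hT']; exact_mod_cast ht₁')
  obtain ⟨B₁, hB₁0, hB₁⟩ := Xupper hXt₁
  refine ⟨Real.exp (2*t₁) * B₁, by positivity, ?_⟩
  intro j x hx0 hx1
  by_cases hneg : u x j ≤ 0
  · exact le_trans hneg (by positivity)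
  push_neg at hneg
  have hEfin := Eset_finite tstar k₁ k
  -- monotonicity of `exp (2 y) * u y j` on intervals of positivity
  have hkey : ∀ {a b : ℝ}, x ≤ a → a ≤ b → b ≤ t₁ → (∀ y ∈ Ico a b, 0 < u y j) →
      Real.exp (2*a) * u a j ≤ Real.exp (2*b) * u b j := by
    intro a b hxa hab hbt₁ hposi
    refine glue_mono hEfin (f := fun y => Real.exp (2*y) * u y j)
      (g := fun y => Real.exp (2*y) * (dLap (fun i => dphi (u y i)) j + 2 * u y j))
      hab ?_ ?_ ?_
    · apply ContinuousOn.mul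
      · exact (Real.continuous_exp.comp (continuous_const.mul continuous_id)).continuousOn
      · exact (hcont j).mono (fun y hy => le_trans (le_trans hx0 hxa) hy.1)
    · intro y hy hyE
      have hd := hasDeriv_slab h hk hT hT' ht₁' j
        (lt_of_le_of_lt (le_trans hx0 hxa) hy.1) (le_trans hy.2.le hbt₁) hyE
      have he : HasDerivAt (fun s => Real.exp (2*s)) (Real.exp (2*y) * 2) y := by
        simpa using ((hasDerivAt_id y).const_mul (2:ℝ)).exp
      have := he.mul hd
      exact this.congr_deriv (by ring)
    · intro y hy hyE
      have hy0 : 0 ≤ y := le_trans (le_trans hx0 hxa) hy.1.le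
      have hy1 : y ≤ t₁ := le_trans hy.2.le hbt₁
      have hu : 0 < u y j := hposi y ⟨hy.1.le, hy.2⟩
      have hp1 : -1 ≤ dphi (u y (j+1)) :=
        neg_one_le_dphi (lower_bound h hk hT hT' ht₁ ht₁' (j+1) hy0 hy1)
      have hm1 : -1 ≤ dphi (u y (j-1)) :=
        neg_one_le_dphi (lower_bound h hk hT hT' ht₁ ht₁' (j-1) hy0 hy1)
      have hj : dphi (u y j) = u y j - 1 := dphi_of_nonneg hu.le
      have : 0 ≤ dLap (fun i => dphi (u y i)) j + 2 * u y j := by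
        simp only [dLap, hj]; linarith
      positivity
  -- positivity persists on `[x, t₁]`
  have hper : ∀ y ∈ Icc x t₁, 0 < u y j := by
    by_contra hcon
    push_neg at hcon
    obtain ⟨y₀, hy₀, hy₀'⟩ := hcon
    set Z := Icc x t₁ ∩ (fun y => u y j) ⁻¹' (Iic 0) with hZdef
    have hZne : Z.Nonempty := ⟨y₀, hy₀, hy₀'⟩
    have hZclosed : IsClosed Z :=
      ContinuousOn.preimage_isClosed_of_isClosed
        ((hcont j).mono (fun y hy => le_trans hx0 hy.1)) isClosed_Icc isClosed_Iic
    have hZbdd : BddBelow Z := ⟨x, fun z hz => hz.1.1⟩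
    set σ₀ := sInf Z with hσ₀def
    have hσ₀Z : σ₀ ∈ Z := hZclosed.csInf_mem hZne hZbdd
    have hxσ₀ : x < σ₀ := by
      rcases eq_or_lt_of_le hσ₀Z.1.1 with heq | hlt
      · exfalso; rw [← heq] at hσ₀Z; exact absurd hσ₀Z.2 (not_le.2 hneg)
      · exact hlt
    have hposi : ∀ y ∈ Ico x σ₀, 0 < u y j := by
      intro y hy
      by_contra hc; push_neg at hc
      have hyZ : y ∈ Z := ⟨⟨hy.1, le_trans hy.2.le hσ₀Z.1.2⟩, hc⟩
      exact absurd (csInf_le hZbdd hyZ) (not_le.2 hy.2)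
    have := hkey le_rfl hxσ₀.le hσ₀Z.1.2 hposi
    have hσ₀neg : u σ₀ j ≤ 0 := hσ₀Z.2
    nlinarith [Real.exp_pos (2*x), Real.exp_pos (2*σ₀)]
  -- conclude
  have hmono := hkey le_rfl hx1 le_rfl (fun y hy => hper y ⟨hy.1, hy.2.le⟩)
  have h1 : u x j ≤ Real.exp (2*x) * u x j :=
    le_mul_of_one_le_left hneg.le (Real.one_le_exp (by linarith))
  have h2 : Real.exp (2*t₁) * u t₁ j ≤ Real.exp (2*t₁) * B₁ :=
    mul_le_mul_of_nonneg_left (hB₁ j) (Real.exp_pos _).le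
  linarith

/-- the discrete maximum principle on the slab `[0, t₁]`. -/
lemma max_principle (h : IsSIS u k₁ tstar) {k : ℤ} (hk : k₁ ≤ k) {T T' : ℝ}
    (hT : tstar k = (T : EReal)) (hT' : tstar (k+1) = (T' : EReal))
    {t₁ : ℝ} (ht₁ : T < t₁) (ht₁' : t₁ < T') :
    ∀ (j : ℤ) (x : ℝ), 0 ≤ x → x ≤ t₁ → u x j ≤ max 2 (⨆ i : ℤ, u 0 i) := by
  obtain ⟨hcont, h0, hpos, hord, hode, htrans, hX⟩ := id h
  have hT0 : 0 < T := tstar_pos_real h hk hT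
  obtain ⟨B, hB0, hB⟩ := slab_bound h hk hT hT' ht₁ ht₁'
  set D := max 2 (⨆ i : ℤ, u 0 i) with hD
  have hD2 : (2:ℝ) ≤ D := le_max_left _ _
  have hbdd : BddAbove (Set.range fun i : ℤ => u 0 i) :=
    ⟨B, by rintro _ ⟨i, rfl⟩; exact hB i 0 le_rfl (by linarith)⟩
  have hu0 : ∀ i : ℤ, u 0 i ≤ D := fun i => le_trans (le_ciSup hbdd i) (le_max_right _ _)
  have hEfin := Eset_finite tstar k₁ k
  have main : ∀ ε : ℝ, 0 < ε → ∀ (j:ℤ) (x:ℝ), 0 ≤ x → x ≤ t₁ → u x j ≤ D + ε := by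
    intro ε hε
    set A := {t : ℝ | t ∈ Icc 0 t₁ ∧ ∀ (j:ℤ) (σ:ℝ), 0 ≤ σ → σ ≤ t → u σ j ≤ D + ε} with hA
    have h0A : (0:ℝ) ∈ A := by
      refine ⟨⟨le_rfl, by linarith⟩, fun j σ h1 h2 => ?_⟩
      have : σ = 0 := le_antisymm h2 h1
      rw [this]; linarith [hu0 j]
    have hAbdd : BddAbove A := ⟨t₁, fun t ht => ht.1.2⟩
    set s := sSup A with hs
    have hs0 : 0 ≤ s := le_csSup hAbdd h0A
    have hs1 : s ≤ t₁ := csSup_le ⟨0, h0A⟩ fun t ht => ht.1.2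
    have hlt : ∀ (j:ℤ) (σ:ℝ), 0 ≤ σ → σ < s → u σ j ≤ D + ε := by
      intro j σ h1 h2
      obtain ⟨t, htA, hσt⟩ := exists_lt_of_lt_csSup ⟨0, h0A⟩ h2
      exact htA.2 j σ h1 hσt.le
    have hsA : s ∈ A := by
      refine ⟨⟨hs0, hs1⟩, fun j σ h1 h2 => ?_⟩
      rcases lt_or_eq_of_le h2 with h2' | h2'
      · exact hlt j σ h1 h2'
      · rcases eq_or_lt_of_le hs0 with hs0' | hs0'
        · rw [h2', ← hs0']; linarith [hu0 j]
        · rw [h2']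
          have htend : Tendsto (fun t => u t j) (nhdsWithin s (Iio s)) (nhds (u s j)) :=
            tendsto_left_of_continuousOn (hcont j) le_rfl hs0'
          refine le_of_tendsto htend ?_
          filter_upwards [Ioo_mem_nhdsLT_of_mem (⟨hs0', le_rfl⟩ : s ∈ Ioc 0 s)] with t ht
          exact hlt j t ht.1.le ht.2
    -- quantitative decay estimate on [0, s]
    have hexp1 : ∀ σ : ℝ, Real.exp (-(2*σ)) * Real.exp (2*σ) = 1 := by
      intro σ; rw [← Real.exp_add]; simp
    have hquant : ∀ (j:ℤ) (σ:ℝ), 0 ≤ σ → σ ≤ s → u σ j ≤ D + ε - ε * Real.exp (-(2*σ)) := by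
      intro j σ h1 h2
      have hg := glue_mono hEfin (a := 0) (b := σ) h1
        (f := fun y => -(Real.exp (2*y) * (u y j - (D+ε))))
        (g := fun y => -(Real.exp (2*y) * (dLap (fun i => dphi (u y i)) j + 2*(u y j - (D+ε)))))
        ?_ ?_ ?_
      · have h3 : Real.exp (2*σ) * (u σ j - (D+ε)) ≤ -ε := by
          norm_num at hg
          have := hu0 j
          linarith
        have h4 : Real.exp (-(2*σ)) * (Real.exp (2*σ) * (u σ j - (D+ε)))
            ≤ Real.exp (-(2*σ)) * (-ε) := mul_le_mul_of_nonneg_left h3 (Real.exp_pos _).le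
        rw [← mul_assoc, hexp1 σ, one_mul] at h4
        linarith
      · apply ContinuousOn.neg
        apply ContinuousOn.mul
        · exact (Real.continuous_exp.comp (continuous_const.mul continuous_id)).continuousOn
        · exact ((hcont j).mono (fun y hy => hy.1)).sub continuousOn_const
      · intro y hy hyE
        have hd := hasDeriv_slab h hk hT hT' ht₁' j hy.1 (by linarith [hy.2.le] : y ≤ t₁) hyE
        have he : HasDerivAt (fun t : ℝ => Real.exp (2*t)) (Real.exp (2*y) * 2) y := by
          simpa using ((hasDerivAt_id y).const_mul (2:ℝ)).exp
        have := (he.mul (hd.sub_const (D+ε))).neg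
        exact this.congr_deriv (by ring)
      · intro y hy hyE
        have hy0 : 0 ≤ y := hy.1.le
        have hyt₁ : y ≤ t₁ := by linarith [hy.2.le]
        have hys : y < s := lt_of_lt_of_le hy.2 h2
        have hub : ∀ i : ℤ, u y i ≤ D + ε := fun i => hlt i y hy0 hys
        have hp1 : dphi (u y (j+1)) ≤ D + ε - 1 := dphi_le_of_le (hub (j+1)) (by linarith)
        have hm1 : dphi (u y (j-1)) ≤ D + ε - 1 := dphi_le_of_le (hub (j-1)) (by linarith)
        have hj2 : u y j - 1 ≤ dphi (u y j) := dphi_ge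
        have hsum : dLap (fun i => dphi (u y i)) j + 2*(u y j - (D+ε)) ≤ 0 := by
          simp only [dLap]; linarith
        have hepos := (Real.exp_pos (2*y)).le
        show (0:ℝ) ≤ -(Real.exp (2*y) * (dLap (fun i => dphi (u y i)) j + 2*(u y j - (D+ε))))
        nlinarith [mul_nonneg hepos (neg_nonneg.mpr hsum)]
    -- continuation beyond s, unless s = t₁
    have hfinal : t₁ ≤ s := by
      by_contra hst₁
      push_neg at hst₁
      set C := 2*B + 8 with hC
      have hCpos : 0 < C := by linarith
      set η := ε * Real.exp (-(2*t₁)) with hη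
      have hηpos : 0 < η := by positivity
      set δ := min (t₁ - s) (η/(2*C)) with hδ
      have hδpos : 0 < δ := lt_min (by linarith) (by positivity)
      set t₂ := s + δ with ht₂
      clear_value t₂
      clear_value δ
      clear_value η
      clear_value C
      have ht₂t₁ : t₂ ≤ t₁ := by
        have := min_le_left (t₁ - s) (η/(2*C)); simp only [ht₂, hδ]; linarith
      have ht₂A : t₂ ∈ A := by
        refine ⟨⟨by linarith, ht₂t₁⟩, ?_⟩
        intro j σ h1 h2
        rcases le_or_gt σ s with h3 | h3
        · exact hsA.2 j σ h1 h3
        · have key2 : C * s - u s j ≤ C * σ - u σ j := by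
            refine glue_mono hEfin (a := s) (b := σ) h3.le
              (f := fun y => C*y - u y j)
              (g := fun y => C - dLap (fun i => dphi (u y i)) j) ?_ ?_ ?_
            · exact ((continuous_const.mul continuous_id).continuousOn).sub
                ((hcont j).mono (fun y hy => le_trans hs0 hy.1))
            · intro y hy hyE
              have hd := hasDeriv_slab h hk hT hT' ht₁' j (lt_of_le_of_lt hs0 hy.1)
                (by linarith [hy.2.le] : y ≤ t₁) hyE
              have := ((hasDerivAt_id y).const_mul C).sub hd
              exact this.congr_deriv (by ring)
            · intro y hy hyE
              have hy0 : 0 ≤ y := le_trans hs0 hy.1.le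
              have hyt₁ : y ≤ t₁ := by linarith [hy.2.le]
              have hub : ∀ i : ℤ, u y i ≤ B := fun i => hB i y hy0 hyt₁
              have hlb : -2 ≤ u y j := lower_bound h hk hT hT' ht₁ ht₁' j hy0 hyt₁
              have hp1 : dphi (u y (j+1)) ≤ B + 1 :=
                le_trans dphi_le_add_one (by linarith [hub (j+1)])
              have hm1 : dphi (u y (j-1)) ≤ B + 1 :=
                le_trans dphi_le_add_one (by linarith [hub (j-1)])
              have hj2 : u y j - 1 ≤ dphi (u y j) := dphi_ge
              simp only [dLap, hC]
              linarith
          have hss : u s j ≤ D + ε - η := by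
            have hq := hquant j s hs0 le_rfl
            have hmono : Real.exp (-(2*t₁)) ≤ Real.exp (-(2*s)) :=
              Real.exp_le_exp.2 (by linarith)
            have : ε * Real.exp (-(2*t₁)) ≤ ε * Real.exp (-(2*s)) :=
              mul_le_mul_of_nonneg_left hmono hε.le
            simp only [hη]
            linarith
          have hσs : σ - s ≤ δ := by simp only [ht₂] at h2; linarith
          have hCσ : C * (σ - s) ≤ η/2 := by
            have h4 : C * (σ - s) ≤ C * δ := mul_le_mul_of_nonneg_left hσs hCpos.le
            have h5 : C * δ ≤ C * (η/(2*C)) :=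
              mul_le_mul_of_nonneg_left (by rw [hδ]; exact min_le_right _ _) hCpos.le
            have h6 : C * (η/(2*C)) = η/2 := by field_simp
            linarith
          linarith
      have := le_csSup hAbdd ht₂A
      simp only [ht₂] at this
      linarith
    intro j x hx0 hx1
    exact hsA.2 j x hx0 (le_trans hx1 hfinal)
  intro j x hx0 hx1
  by_contra hc
  push_neg at hc
  have := main ((u x j - D)/2) (by linarith) j x hx0 hx1
  linarith

end MaxPrinciple

section Key
variable {u : ℝ → ℤ → ℝ} {k₁ : ℤ} {tstar : ℤ → EReal}

lemma key (h : IsSIS u k₁ tstar) {k : ℤ} (hk : k₁ ≤ k) {T : ℝ}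
    (hT : tstar k = (T : EReal)) :
    u T (k+1) < 0 ∧ 0 ≤ u T (k+1) + u T (k-1) - 2 ∧
    Tendsto (deriv (fun s => u s k)) (nhdsWithin T (Iio T))
      (nhds (u T (k+1) + u T (k-1) - 2)) ∧
    Tendsto (deriv (fun s => u s k)) (nhdsWithin T (Ioi T))
      (nhds (u T (k+1) + u T (k-1) + 2)) := by
  obtain ⟨hcont, h0, hpos, hord, hode, htrans, hX⟩ := id h
  have hT0 : 0 < T := tstar_pos_real h hk hT
  obtain ⟨t₀, ht₀0, ht₀T, ht₀⟩ := lemA h hk hT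
  have hXleft : ∀ {t : ℝ}, t₀ < t → t < T → (fun j => u t j) ∈ Xset k := fun ht1 ht2 =>
    hX k hk _ (by rw [ht₀]; exact_mod_cast ht1) (by rw [hT]; exact_mod_cast ht2)
  have hTk1 : (T:EReal) < tstar (k+1) := by
    rcases hord (k+1) (by omega) with hh | hh
    · rw [show k+1-1 = k by ring, hT] at hh
      exact absurd hh (EReal.coe_ne_top T)
    · rwa [show k+1-1 = k by ring, hT] at hh
  obtain ⟨x, hx1, hx2⟩ := EReal.lt_iff_exists_real_btwn.mp hTk1
  have hTx : T < x := by exact_mod_cast hx1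
  have hXright : ∀ {t : ℝ}, T < t → t < x → (fun j => u t j) ∈ Xset (k+1) := fun ht1 ht2 =>
    hX (k+1) (by omega) _ (by rw [show k+1-1 = k by ring, hT]; exact_mod_cast ht1)
      (lt_trans (by exact_mod_cast ht2) hx2)
  have huTk : u T k = 0 := (htrans k hk T hT).1
  -- derivative formulas
  have hdleft : ∀ {t : ℝ}, t₀ < t → t < T →
      HasDerivAt (fun s => u s k) (u t (k+1) - 2*u t k + u t (k-1) - 2) t := by
    intro t ht1 ht2
    have hXt := hXleft ht1 ht2
    have hd := hode k t (by linarith) (noTrans h hXt)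
    have heq : dLap (fun i => dphi (u t i)) k = u t (k+1) - 2*u t k + u t (k-1) - 2 := by
      have e1 : dphi (u t (k+1)) = u t (k+1) + 1 := dphi_of_neg (Xneg hXt (by omega))
      have e2 : dphi (u t k) = u t k + 1 := dphi_of_neg (Xneg hXt le_rfl)
      have e3 : dphi (u t (k-1)) = u t (k-1) - 1 := dphi_of_nonneg (Xpos hXt (by omega)).le
      simp only [dLap, e1, e2, e3]; ring
    rwa [heq] at hd
  have hdleft1 : ∀ {t : ℝ}, t₀ < t → t < T →
      HasDerivAt (fun s => u s (k+1)) (u t (k+2) - 2*u t (k+1) + u t k) t := by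
    intro t ht1 ht2
    have hXt := hXleft ht1 ht2
    have hd := hode (k+1) t (by linarith) (noTrans h hXt)
    have heq : dLap (fun i => dphi (u t i)) (k+1) = u t (k+2) - 2*u t (k+1) + u t k := by
      have e1 : dphi (u t (k+1+1)) = u t (k+1+1) + 1 := dphi_of_neg (Xneg hXt (by omega))
      have e2 : dphi (u t (k+1)) = u t (k+1) + 1 := dphi_of_neg (Xneg hXt (by omega))
      have e3 : dphi (u t (k+1-1)) = u t (k+1-1) + 1 := dphi_of_neg (Xneg hXt (by omega))
      simp only [dLap, e1, e2, e3]
      rw [show k+1+1 = k+2 by ring, show k+1-1 = k by ring]; ring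
    rwa [heq] at hd
  have hdright : ∀ {t : ℝ}, T < t → t < x →
      HasDerivAt (fun s => u s k) (u t (k+1) - 2*u t k + u t (k-1) + 2) t := by
    intro t ht1 ht2
    have hXt := hXright ht1 ht2
    have hd := hode k t (by linarith) (noTrans h hXt)
    have heq : dLap (fun i => dphi (u t i)) k = u t (k+1) - 2*u t k + u t (k-1) + 2 := by
      have e1 : dphi (u t (k+1)) = u t (k+1) + 1 := dphi_of_neg (Xneg hXt (by omega))
      have e2 : dphi (u t k) = u t k - 1 := dphi_of_nonneg (Xpos hXt (by omega)).le
      have e3 : dphi (u t (k-1)) = u t (k-1) - 1 := dphi_of_nonneg (Xpos hXt (by omega)).le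
      simp only [dLap, e1, e2, e3]; ring
    rwa [heq] at hd
  -- coordinatewise one-sided continuity
  have htl : ∀ j : ℤ, Tendsto (fun t => u t j) (nhdsWithin T (Iio T)) (nhds (u T j)) :=
    fun j => tendsto_left_of_continuousOn (hcont j) ht₀0 ht₀T
  have htr : ∀ j : ℤ, Tendsto (fun t => u t j) (nhdsWithin T (Ioi T)) (nhds (u T j)) :=
    fun j => tendsto_right_of_continuousOn (hcont j) hT0.le hTx
  have hmemL : Ioo t₀ T ∈ nhdsWithin T (Iio T) :=
    Ioo_mem_nhdsLT_of_mem (⟨ht₀T, le_rfl⟩ : T ∈ Ioc t₀ T)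
  have hmemR : Ioo T x ∈ nhdsWithin T (Ioi T) :=
    Ioo_mem_nhdsGT_of_mem (⟨le_rfl, hTx⟩ : T ∈ Ico T x)
  -- left limit of deriv
  have hTL : Tendsto (deriv (fun s => u s k)) (nhdsWithin T (Iio T))
      (nhds (u T (k+1) + u T (k-1) - 2)) := by
    have hG : Tendsto (fun t => u t (k+1) - 2*u t k + u t (k-1) - 2)
        (nhdsWithin T (Iio T)) (nhds (u T (k+1) - 2*u T k + u T (k-1) - 2)) := by
      exact (((htl (k+1)).sub ((htl k).const_mul 2)).add (htl (k-1))).sub_const 2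
    rw [huTk] at hG
    have heq : (fun t => u t (k+1) - 2*u t k + u t (k-1) - 2)
        =ᶠ[nhdsWithin T (Iio T)] (deriv (fun s => u s k)) := by
      filter_upwards [hmemL] with t ht
      exact ((hdleft ht.1 ht.2).deriv).symm
    have := hG.congr' heq
    convert this using 2
    ring
  -- right limit of deriv
  have hTR : Tendsto (deriv (fun s => u s k)) (nhdsWithin T (Ioi T))
      (nhds (u T (k+1) + u T (k-1) + 2)) := by
    have hG : Tendsto (fun t => u t (k+1) - 2*u t k + u t (k-1) + 2)
        (nhdsWithin T (Ioi T)) (nhds (u T (k+1) - 2*u T k + u T (k-1) + 2)) := by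
      exact (((htr (k+1)).sub ((htr k).const_mul 2)).add (htr (k-1))).add_const 2
    rw [huTk] at hG
    have heq : (fun t => u t (k+1) - 2*u t k + u t (k-1) + 2)
        =ᶠ[nhdsWithin T (Ioi T)] (deriv (fun s => u s k)) := by
      filter_upwards [hmemR] with t ht
      exact ((hdright ht.1 ht.2).deriv).symm
    have := hG.congr' heq
    convert this using 2
    ring
  -- u T (k+1) < 0 via the decay estimate
  have hneg : u T (k+1) < 0 := by
    set b := (t₀ + T)/2 with hb
    have hb1 : t₀ < b := by simp only [hb]; linarith
    have hb2 : b < T := by simp only [hb]; linarith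
    have hw := glue_mono (E := (∅ : Set ℝ)) finite_empty (a := b) (b := T) hb2.le
      (f := fun y => -(Real.exp (2*y) * u y (k+1)))
      (g := fun y => -(Real.exp (2*y) * (u y (k+2) + u y k)))
      ?_ ?_ ?_
    · have hub : u b (k+1) < 0 := Xneg (hXleft hb1 hb2) (by omega)
      have h1 := Real.exp_pos (2*b)
      have h2 := Real.exp_pos (2*T)
      nlinarith
    · apply ContinuousOn.neg
      apply ContinuousOn.mul
      · exact (Real.continuous_exp.comp (continuous_const.mul continuous_id)).continuousOn
      · exact (hcont (k+1)).mono (fun y hy => by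
          simp only [mem_Icc] at hy; simp only [mem_Ici]; linarith [hy.1])
    · intro y hy _
      have hy1 : t₀ < y := lt_trans hb1 hy.1
      have hd := hdleft1 hy1 hy.2
      have he : HasDerivAt (fun t : ℝ => Real.exp (2*t)) (Real.exp (2*y) * 2) y := by
        simpa using ((hasDerivAt_id y).const_mul (2:ℝ)).exp
      have := (he.mul hd).neg
      exact this.congr_deriv (by ring)
    · intro y hy _
      have hXt := hXleft (lt_trans hb1 hy.1) hy.2
      have h1 := Xneg hXt (by omega : k ≤ k+2)
      have h2 := Xneg hXt (le_refl k)
      have h3 := (Real.exp_pos (2*y)).le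
      show (0:ℝ) ≤ -(Real.exp (2*y) * (u y (k+2) + u y k))
      nlinarith
  -- nonnegativity of the left limit
  have hLm : 0 ≤ u T (k+1) + u T (k-1) - 2 := by
    by_contra hcon
    push_neg at hcon
    set Lm := u T (k+1) + u T (k-1) - 2 with hLmdef
    have hev : ∀ᶠ t in nhdsWithin T (Iio T), deriv (fun s => u s k) t < Lm/2 :=
      hTL.eventually_lt_const (by simp only [hLmdef]; linarith)
    obtain ⟨l, hlT, hsub⟩ := mem_nhdsLT_iff_exists_Ioo_subset.mp
      (Filter.inter_mem hev hmemL)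
    set b := (max l t₀ + T)/2 with hb
    have hmaxlt : max l t₀ < T := max_lt (by exact hlT) ht₀T
    have hb1 : l < b := by
      have := le_max_left l t₀; simp only [hb]; linarith
    have hb1' : t₀ < b := by
      have := le_max_right l t₀; simp only [hb]; linarith
    have hb2 : b < T := by simp only [hb]; linarith
    have hg := glue_mono (E := (∅ : Set ℝ)) finite_empty (a := b) (b := T) hb2.le
      (f := fun y => (Lm/2)*y - u y k)
      (g := fun y => Lm/2 - (u y (k+1) - 2*u y k + u y (k-1) - 2))
      ?_ ?_ ?_
    · have hub : u b k < 0 := Xneg (hXleft hb1' hb2) le_rfl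
      simp only [huTk] at hg
      -- hg : Lm/2*b - u b k ≤ Lm/2*T - 0
      nlinarith
    · apply ContinuousOn.sub
      · exact (continuous_const.mul continuous_id).continuousOn
      · exact (hcont k).mono (fun y hy => by
          simp only [mem_Icc] at hy; simp only [mem_Ici]; linarith [hy.1])
    · intro y hy _
      have hd := hdleft (lt_trans hb1' hy.1) hy.2
      have := ((hasDerivAt_id y).const_mul (Lm/2)).sub hd
      exact this.congr_deriv (by ring)
    · intro y hy _
      have hyIoo : y ∈ Ioo l T := ⟨lt_trans hb1 hy.1, hy.2⟩
      have hmem := hsub hyIoo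
      have hder : deriv (fun s => u s k) y = u y (k+1) - 2*u y k + u y (k-1) - 2 :=
        (hdleft (lt_trans hb1' hy.1) hy.2).deriv
      have := hmem.1
      simp only [Set.mem_setOf_eq] at this
      rw [hder] at this
      show (0:ℝ) ≤ Lm/2 - (u y (k+1) - 2*u y k + u y (k-1) - 2)
      linarith
  exact ⟨hneg, hLm, hTL, hTR⟩

end Key

/-- Properties of finite phase transitions of single-interface solutions
(Theorem 3.2, second part). -/
theorem single_interface_transition_properties
    (k₁ : ℤ) (u : ℝ → ℤ → ℝ) (tstar : ℤ → EReal) (h : IsSIS u k₁ tstar)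
    (k : ℤ) (hk : k₁ ≤ k) (T : ℝ) (hT : tstar k = (T : EReal)) :
    2 < u T (k - 1) ∧
    (∃ Lm : ℝ,
      Filter.Tendsto (deriv (fun s => u s k)) (nhdsWithin T (Set.Iio T)) (nhds Lm) ∧
      Filter.Tendsto (deriv (fun s => u s k)) (nhdsWithin T (Set.Ioi T)) (nhds (4 + Lm)) ∧
      4 ≤ 4 + Lm) ∧
    (∀ T' : ℝ, tstar (k + 1) = (T' : EReal) →
      Real.log (Real.sqrt ((max 2 (⨆ i : ℤ, u 0 i) + 2) / (max 2 (⨆ i : ℤ, u 0 i) - 2)))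
        ≤ T' - T) := by
  obtain ⟨hcont, h0, hpos, hord, hode, htrans, hX⟩ := id h
  obtain ⟨hneg, hLm, hTL, hTR⟩ := key h hk hT
  have huTk : u T k = 0 := (htrans k hk T hT).1
  have hT0 : 0 < T := tstar_pos_real h hk hT
  refine ⟨by linarith, ⟨u T (k+1) + u T (k-1) - 2, hTL, ?_, by linarith⟩, ?_⟩
  · rw [show (4:ℝ) + (u T (k+1) + u T (k-1) - 2) = u T (k+1) + u T (k-1) + 2 by ring]
    exact hTR
  · intro T' hT'
    have hk1 : k₁ ≤ k + 1 := by omega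
    have hTT' : T < T' := by
      rcases hord (k+1) hk1 with hh | hh
      · rw [show k+1-1 = k by ring, hT] at hh
        exact absurd hh (EReal.coe_ne_top T)
      · rw [show k+1-1 = k by ring, hT, hT'] at hh
        exact_mod_cast hh
    -- the transition value at k+1 gives 2 < u T' k
    obtain ⟨hneg', hLm', -, -⟩ := key h hk1 hT'
    have h2' : 2 < u T' k := by
      rw [show k+1-1 = k by ring] at hLm'
      linarith
    set D := max 2 (⨆ i : ℤ, u 0 i) with hD
    have hD2 : (2:ℝ) ≤ D := le_max_left _ _
    -- Gronwall inequality up to each t₁ < T'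
    have hineq : ∀ t₁ : ℝ, T < t₁ → t₁ < T' →
        Real.exp (2*t₁) * u t₁ k ≤ (D+2)/2 * (Real.exp (2*t₁) - Real.exp (2*T)) := by
      intro t₁ h1 h2
      have hMP := max_principle h hk hT hT' h1 h2
      have hXmid : ∀ {t : ℝ}, T < t → t < T' → (fun j => u t j) ∈ Xset (k+1) :=
        fun ha hb => hX (k+1) hk1 _ (by rw [show k+1-1 = k by ring, hT]; exact_mod_cast ha)
          (by rw [hT']; exact_mod_cast hb)
      have hg := glue_mono (E := (∅ : Set ℝ)) Set.finite_empty (a := T) (b := t₁) h1.le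
        (f := fun y => (D+2)/2 * Real.exp (2*y) - Real.exp (2*y) * u y k)
        (g := fun y => Real.exp (2*y) * (D - u y (k+1) - u y (k-1)))
        ?_ ?_ ?_
      · simp only [huTk, mul_zero, sub_zero] at hg
        linarith
      · apply ContinuousOn.sub
        · exact (continuous_const.mul
            (Real.continuous_exp.comp (continuous_const.mul continuous_id))).continuousOn
        · exact ((Real.continuous_exp.comp (continuous_const.mul continuous_id)).continuousOn).mul
            ((hcont k).mono (fun y hy => by
              simp only [mem_Icc] at hy; simp only [mem_Ici]; linarith [hy.1]))
      · intro y hy _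
        have hXt := hXmid hy.1 (lt_trans hy.2 h2)
        have hd := hode k y (by linarith [hy.1]) (noTrans h hXt)
        have heq : dLap (fun i => dphi (u y i)) k = u y (k+1) - 2*u y k + u y (k-1) + 2 := by
          have e1 : dphi (u y (k+1)) = u y (k+1) + 1 := dphi_of_neg (Xneg hXt (by omega))
          have e2 : dphi (u y k) = u y k - 1 := dphi_of_nonneg (Xpos hXt (by omega)).le
          have e3 : dphi (u y (k-1)) = u y (k-1) - 1 := dphi_of_nonneg (Xpos hXt (by omega)).le
          simp only [dLap, e1, e2, e3]; ring
        rw [heq] at hd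
        have he : HasDerivAt (fun t : ℝ => Real.exp (2*t)) (Real.exp (2*y) * 2) y := by
          simpa using ((hasDerivAt_id y).const_mul (2:ℝ)).exp
        have := (he.const_mul ((D+2)/2)).sub (he.mul hd)
        exact this.congr_deriv (by ring)
      · intro y hy _
        have hXt := hXmid hy.1 (lt_trans hy.2 h2)
        have hu1 : u y (k+1) < 0 := Xneg hXt (by omega)
        have hu2 : u y (k-1) ≤ D := hMP (k-1) y (by linarith [hy.1]) hy.2.le
        have : (0:ℝ) ≤ D - u y (k+1) - u y (k-1) := by linarith
        positivity
    -- limit t₁ → T'⁻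
    have hlimit : Real.exp (2*T') * u T' k ≤ (D+2)/2 * (Real.exp (2*T') - Real.exp (2*T)) := by
      have hconte : Tendsto (fun t : ℝ => Real.exp (2*t)) (nhdsWithin T' (Iio T'))
          (nhds (Real.exp (2*T'))) :=
        ((Real.continuous_exp.comp (continuous_const.mul continuous_id)).tendsto T').mono_left
          nhdsWithin_le_nhds
      have hcontu : Tendsto (fun t => u t k) (nhdsWithin T' (Iio T')) (nhds (u T' k)) :=
        tendsto_left_of_continuousOn (hcont k) hT0.le hTT'
      have htend : Tendsto
          (fun t => (D+2)/2 * (Real.exp (2*t) - Real.exp (2*T)) - Real.exp (2*t) * u t k)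
          (nhdsWithin T' (Iio T'))
          (nhds ((D+2)/2 * (Real.exp (2*T') - Real.exp (2*T)) - Real.exp (2*T') * u T' k)) :=
        ((hconte.sub_const _).const_mul _).sub (hconte.mul hcontu)
      have hge : 0 ≤ (D+2)/2 * (Real.exp (2*T') - Real.exp (2*T)) - Real.exp (2*T') * u T' k := by
        refine ge_of_tendsto htend ?_
        filter_upwards [Ioo_mem_nhdsLT_of_mem (⟨hTT', le_rfl⟩ : T' ∈ Ioc T T')] with t ht
        linarith [hineq t ht.1 ht.2]
      linarith
    -- final algebra
    have he1 := Real.exp_pos (2*T)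
    have he2 := Real.exp_pos (2*T')
    have hstep : Real.exp (2*T') * 2 < Real.exp (2*T') * u T' k :=
      mul_lt_mul_of_pos_left h2' he2
    have hexp : (D+2) * Real.exp (2*T) < (D-2) * Real.exp (2*T') := by nlinarith
    have hD2' : (2:ℝ) < D := by nlinarith
    have hfrac : (D+2)/(D-2) ≤ Real.exp (2*(T'-T)) := by
      rw [div_le_iff₀ (by linarith : (0:ℝ) < D - 2)]
      rw [show 2*(T'-T) = 2*T' - 2*T by ring, Real.exp_sub, div_mul_eq_mul_div,
        le_div_iff₀ he1]
      nlinarith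
    have hlog : Real.log ((D+2)/(D-2)) ≤ 2*(T'-T) := by
      rw [Real.log_le_iff_le_exp (div_pos (by linarith) (by linarith))]
      exact hfrac
    rw [Real.log_sqrt (le_of_lt (div_pos (by linarith) (by linarith)))]
    linarith
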